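/- Let P = ⟨⨆_{i∈I} A_i, operations⟩ be the Płonka sum of a semilattice direct system ⟨A_i, p_{ii'}, I⟩ of Boolean algebras with I having a least element. Then the set of positive elements of P (elements a with a ∨ a* = a, where ∨ and negation are the Płonka sum operations) is exactly {1_i : i ∈ I}, the set of top elements of the Boolean components. -/

import Mathlib

section Plonka

variable {I : Type*} [SemilatticeSup I] [OrderBot I]
  (A : I → Type*) [∀ i, BooleanAlgebra (A i)]
  (p : ∀ i j, i ≤ j → A i → A j)

/-- Join in the Płonka sum of the system ⟨A_i, p, I⟩: both arguments are pushed into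
the component indexed by the join of their indices. -/
def psup (x y : Σ i, A i) : Σ i, A i :=
  ⟨x.1 ⊔ y.1, p x.1 (x.1 ⊔ y.1) le_sup_left x.2 ⊔ p y.1 (x.1 ⊔ y.1) le_sup_right y.2⟩

/-- Negation in the Płonka sum: complement within the component. -/
def pneg (x : Σ i, A i) : Σ i, A i := ⟨x.1, x.2ᶜ⟩

end Plonka

/-- in the Płonka sum of a semilattice direct system of Boolean algebras
(index semilattice with least element), the positive elements (those a with
a ∨ ¬a = a) are exactly the top elements 1_i of the Boolean components. -/
theorem plonka_positive_iff_top {I : Type*} [SemilatticeSup I] [OrderBot I]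
    (A : I → Type*) [∀ i, BooleanAlgebra (A i)]
    (p : ∀ i j, i ≤ j → A i → A j)
    (p_id : ∀ i (a : A i), p i i le_rfl a = a)
    (p_comp : ∀ i j k (h1 : i ≤ j) (h2 : j ≤ k) (a : A i),
      p j k h2 (p i j h1 a) = p i k (h1.trans h2) a)
    (p_sup : ∀ i j (h : i ≤ j) (a b : A i), p i j h (a ⊔ b) = p i j h a ⊔ p i j h b)
    (p_compl : ∀ i j (h : i ≤ j) (a : A i), p i j h aᶜ = (p i j h a)ᶜ) :
    ∀ x : Σ i, A i, psup A p x (pneg A x) = x ↔ ∃ i : I, x = ⟨i, (⊤ : A i)⟩ := by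
  have top_eq : ∀ i j : I, i = j → (⟨i, (⊤ : A i)⟩ : Σ i, A i) = ⟨j, (⊤ : A j)⟩ := by
    intro i j h; subst h; rfl
  intro x
  obtain ⟨i, a⟩ := x
  have key : psup A p ⟨i, a⟩ (pneg A ⟨i, a⟩) = ⟨i ⊔ i, (⊤ : A (i ⊔ i))⟩ := by
    simp only [psup, pneg]
    congr 1
    show p i (i ⊔ i) le_sup_left a ⊔ p i (i ⊔ i) le_sup_right aᶜ = ⊤
    rw [p_compl, sup_compl_eq_top]
  rw [key]
  constructor
  · intro h
    exact ⟨i ⊔ i, h ▸ rfl⟩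
  · rintro ⟨j, hj⟩
    have hij : i = j := congrArg Sigma.fst hj
    subst hij
    have ha : a = (⊤ : A i) := by
      have := (Sigma.mk.inj_iff.mp hj).2
      exact eq_of_heq this
    subst ha
    exact top_eq _ _ (sup_idem i)
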